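/- Sign of dependence determines δ: consider two variables j₁ and j₂ of the same block of the one-factor binary model with δ_{j₁} = 1, α_{j₁}, α_{j₂} ∈ (0,1) and ε_{j₁}, ε_{j₂} ∈ (0,1), and let p₁₁ := ∫₀¹ p_{j₁}(u) p_{j₂}(u) du. Then p₁₁ > α_{j₁}α_{j₂} if δ_{j₂} = 1, and p₁₁ < α_{j₁}α_{j₂} if δ_{j₂} = 0. -/

import Mathlib

open MeasureTheory

private lemma step_integral (a b k : ℝ) (hab : a ≤ b) (f : ℝ → ℝ)
    (hi : IntervalIntegrable f volume a b)
    (h : ∀ u ∈ Set.Ioo a b, f u = k) :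
    ∫ u in a..b, f u = (b - a) * k := by
  have heq : ∫ u in a..b, f u = ∫ _u in a..b, k := by
    apply intervalIntegral.integral_congr_ae
    have hb : ∀ᵐ x : ℝ, x ≠ b := by
      rw [MeasureTheory.ae_iff]
      simpa using MeasureTheory.measure_singleton (α := ℝ) b
    filter_upwards [hb] with x hx hmem
    rw [Set.uIoc_of_le hab] at hmem
    exact h x ⟨hmem.1, lt_of_le_of_ne hmem.2 hx⟩
  rw [heq, intervalIntegral.integral_const, smul_eq_mul]

private lemma step_intable (f : ℝ → ℝ) (hmeas : Measurable f) (C : ℝ)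
    (hC : ∀ x, |f x| ≤ C) (a b : ℝ) : IntervalIntegrable f volume a b := by
  rw [intervalIntegrable_iff]
  have hfin : volume (Set.uIoc a b) < ⊤ := by
    rw [Set.uIoc, Real.volume_Ioc]; exact ENNReal.ofReal_lt_top
  exact ((MeasureTheory.integrableOn_const_iff (C := C)).mpr (Or.inr hfin)).mono'
    hmeas.aestronglyMeasurable (Filter.Eventually.of_forall fun x => hC x)

private lemma calc3 (f : ℝ → ℝ) (c d v1 v2 v3 : ℝ) (h0c : (0:ℝ) ≤ c) (hcd : c ≤ d)
    (hd1 : d ≤ 1) (hmeas : Measurable f) (C : ℝ) (hC : ∀ x, |f x| ≤ C)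
    (h1 : ∀ u ∈ Set.Ioo 0 c, f u = v1) (h2 : ∀ u ∈ Set.Ioo c d, f u = v2)
    (h3 : ∀ u ∈ Set.Ioo d 1, f u = v3) :
    ∫ u in (0:ℝ)..1, f u = c * v1 + (d - c) * v2 + (1 - d) * v3 := by
  have hi : ∀ a b : ℝ, IntervalIntegrable f volume a b := step_intable f hmeas C hC
  have s1 : ∫ u in (0:ℝ)..c, f u = (c - 0) * v1 := step_integral 0 c v1 h0c f (hi 0 c) h1
  have s2 : ∫ u in c..d, f u = (d - c) * v2 := step_integral c d v2 hcd f (hi c d) h2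
  have s3 : ∫ u in d..(1:ℝ), f u = (1 - d) * v3 := step_integral d 1 v3 hd1 f (hi d 1) h3
  have hsplit : ∫ u in (0:ℝ)..1, f u =
      (∫ u in (0:ℝ)..c, f u) + (∫ u in c..d, f u) + ∫ u in d..(1:ℝ), f u := by
    rw [intervalIntegral.integral_add_adjacent_intervals (hi 0 c) (hi c d),
        intervalIntegral.integral_add_adjacent_intervals (hi 0 d) (hi d 1)]
  rw [hsplit, s1, s2, s3]; ring

/-- **Sign of dependence determines `δ`.**
For two variables of the same block of the one-factor binary model with `δ₁ = 1`,
`α₁, α₂ ∈ (0,1)`, `ε₁, ε₂ ∈ (0,1)` and `p₁₁ = ∫₀¹ p₁(u) p₂(u) du`, one has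
`p₁₁ > α₁α₂` if `δ₂ = 1`, and `p₁₁ < α₁α₂` if `δ₂ = 0`. -/
theorem sign_of_dependence
    (α1 ε1 δ1 α2 ε2 δ2 β1 β2 lam1 ν1 lam2 ν2 p11 : ℝ)
    (hα1 : α1 ∈ Set.Ioo (0:ℝ) 1) (hα2 : α2 ∈ Set.Ioo (0:ℝ) 1)
    (hε1 : ε1 ∈ Set.Ioo (0:ℝ) 1) (hε2 : ε2 ∈ Set.Ioo (0:ℝ) 1)
    (hδ1 : δ1 = 1) (hδ2 : δ2 = 0 ∨ δ2 = 1)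
    (hβ1 : β1 = if δ1 = 1 then α1 else 1 - α1)
    (hβ2 : β2 = if δ2 = 1 then α2 else 1 - α2)
    (hlam1 : lam1 = (1 - ε1) * α1 + ε1 * δ1) (hν1 : ν1 = (1 - ε1) * α1 + ε1 * (1 - δ1))
    (hlam2 : lam2 = (1 - ε2) * α2 + ε2 * δ2) (hν2 : ν2 = (1 - ε2) * α2 + ε2 * (1 - δ2))
    (hp11 : p11 = ∫ u in (0:ℝ)..1,
      (if u < β1 then lam1 else ν1) * (if u < β2 then lam2 else ν2)) :
    (δ2 = 1 → α1 * α2 < p11) ∧ (δ2 = 0 → p11 < α1 * α2) := by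
  obtain ⟨hα1p, hα1l⟩ := hα1
  obtain ⟨hα2p, hα2l⟩ := hα2
  obtain ⟨hε1p, hε1l⟩ := hε1
  obtain ⟨hε2p, hε2l⟩ := hε2
  set f : ℝ → ℝ := fun u =>
    (if u < β1 then lam1 else ν1) * (if u < β2 then lam2 else ν2) with hf
  have hmeas : Measurable f := by
    exact (Measurable.ite measurableSet_Iio measurable_const measurable_const).mul
      (Measurable.ite measurableSet_Iio measurable_const measurable_const)
  have hbd1 : ∀ (c x y : ℝ) u, |if u < c then x else y| ≤ |x| + |y| := by
    intro c x y u
    split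
    · nlinarith [abs_nonneg y]
    · nlinarith [abs_nonneg x]
  have hC : ∀ u, |f u| ≤ (|lam1| + |ν1|) * (|lam2| + |ν2|) := by
    intro u
    rw [hf, abs_mul]
    exact mul_le_mul (hbd1 β1 lam1 ν1 u) (hbd1 β2 lam2 ν2 u) (abs_nonneg _)
      (by positivity)
  have hβ1' : β1 = α1 := by rw [hβ1, if_pos hδ1]
  rw [hδ1] at hlam1 hν1
  constructor
  · intro h2
    have hβ2' : β2 = α2 := by rw [hβ2, if_pos h2]
    rw [h2] at hlam2 hν2
    rcases le_total α1 α2 with hle | hle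
    · have key : p11 = α1 * (lam1 * lam2) + (α2 - α1) * (ν1 * lam2)
          + (1 - α2) * (ν1 * ν2) := by
        rw [hp11]
        refine calc3 f α1 α2 _ _ _ hα1p.le hle hα2l.le hmeas _ hC ?_ ?_ ?_
        · intro u hu
          rw [hf]; simp only
          rw [if_pos (hβ1' ▸ hu.2), if_pos (hβ2' ▸ lt_of_lt_of_le hu.2 hle)]
        · intro u hu
          rw [hf]; simp only
          rw [if_neg (by rw [hβ1']; linarith [hu.1]), if_pos (hβ2' ▸ hu.2)]
        · intro u hu
          rw [hf]; simp only
          rw [if_neg (by rw [hβ1']; linarith [hu.1]),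
              if_neg (by rw [hβ2']; linarith [hu.1])]
      have hdiff : p11 - α1 * α2 = ε1 * ε2 * (α1 * (1 - α2)) := by
        rw [key, hlam1, hν1, hlam2, hν2]; ring
      nlinarith [mul_pos (mul_pos hε1p hε2p) (mul_pos hα1p (by linarith : (0:ℝ) < 1 - α2))]
    · have key : p11 = α2 * (lam1 * lam2) + (α1 - α2) * (lam1 * ν2)
          + (1 - α1) * (ν1 * ν2) := by
        rw [hp11]
        refine calc3 f α2 α1 _ _ _ hα2p.le hle hα1l.le hmeas _ hC ?_ ?_ ?_
        · intro u hu
          rw [hf]; simp only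
          rw [if_pos (hβ1' ▸ lt_of_lt_of_le hu.2 hle), if_pos (hβ2' ▸ hu.2)]
        · intro u hu
          rw [hf]; simp only
          rw [if_pos (hβ1' ▸ hu.2), if_neg (by rw [hβ2']; linarith [hu.1])]
        · intro u hu
          rw [hf]; simp only
          rw [if_neg (by rw [hβ1']; linarith [hu.1]),
              if_neg (by rw [hβ2']; linarith [hu.1])]
      have hdiff : p11 - α1 * α2 = ε1 * ε2 * (α2 * (1 - α1)) := by
        rw [key, hlam1, hν1, hlam2, hν2]; ring
      nlinarith [mul_pos (mul_pos hε1p hε2p) (mul_pos hα2p (by linarith : (0:ℝ) < 1 - α1))]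
  · intro h2
    have hβ2' : β2 = 1 - α2 := by
      rw [hβ2, if_neg (by rw [h2]; norm_num)]
    rw [h2] at hlam2 hν2
    rcases le_total α1 (1 - α2) with hle | hle
    · have key : p11 = α1 * (lam1 * lam2) + ((1 - α2) - α1) * (ν1 * lam2)
          + (1 - (1 - α2)) * (ν1 * ν2) := by
        rw [hp11]
        refine calc3 f α1 (1 - α2) _ _ _ hα1p.le hle (by linarith) hmeas _ hC ?_ ?_ ?_
        · intro u hu
          rw [hf]; simp only
          rw [if_pos (hβ1' ▸ hu.2), if_pos (hβ2' ▸ lt_of_lt_of_le hu.2 hle)]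
        · intro u hu
          rw [hf]; simp only
          rw [if_neg (by rw [hβ1']; linarith [hu.1]), if_pos (hβ2' ▸ hu.2)]
        · intro u hu
          rw [hf]; simp only
          rw [if_neg (by rw [hβ1']; linarith [hu.1]),
              if_neg (by rw [hβ2']; linarith [hu.1])]
      have hdiff : p11 - α1 * α2 = -(ε1 * ε2 * (α1 * α2)) := by
        rw [key, hlam1, hν1, hlam2, hν2]; ring
      nlinarith [mul_pos (mul_pos hε1p hε2p) (mul_pos hα1p hα2p)]
    · have key : p11 = (1 - α2) * (lam1 * lam2) + (α1 - (1 - α2)) * (lam1 * ν2)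
          + (1 - α1) * (ν1 * ν2) := by
        rw [hp11]
        refine calc3 f (1 - α2) α1 _ _ _ (by linarith) hle hα1l.le hmeas _ hC ?_ ?_ ?_
        · intro u hu
          rw [hf]; simp only
          rw [if_pos (hβ1' ▸ lt_of_lt_of_le hu.2 hle), if_pos (hβ2' ▸ hu.2)]
        · intro u hu
          rw [hf]; simp only
          rw [if_pos (hβ1' ▸ hu.2), if_neg (by rw [hβ2']; linarith [hu.1])]
        · intro u hu
          rw [hf]; simp only
          rw [if_neg (by rw [hβ1']; linarith [hu.1]),
              if_neg (by rw [hβ2']; linarith [hu.1])]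
      have hdiff : p11 - α1 * α2 = -(ε1 * ε2 * ((1 - α1) * (1 - α2))) := by
        rw [key, hlam1, hν1, hlam2, hν2]; ring
      nlinarith [mul_pos (mul_pos hε1p hε2p)
        (mul_pos (by linarith : (0:ℝ) < 1 - α1) (by linarith : (0:ℝ) < 1 - α2))]
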